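/- Let u, v, ũ, ṽ be complex numbers of absolute value 1. Then Φ_{B₂}(u,v) = Φ_{B₂}(ũ,ṽ) if and only if the pair (ũ,ṽ) is one of the eight pairs (u,v), (u,v⁻¹), (u⁻¹,v), (u⁻¹,v⁻¹), (v,u), (v⁻¹,u), (v,u⁻¹), (v⁻¹,u⁻¹). -/

import Mathlib

/-- `Φ_{B₂}(u,v) = (u + u⁻¹ + v + v⁻¹, uv + (uv)⁻¹ + uv⁻¹ + u⁻¹v)`. -/
noncomputable def PhiB2 (u v : ℂ) : ℂ × ℂ :=
  (u + u⁻¹ + v + v⁻¹, u * v + (u * v)⁻¹ + u * v⁻¹ + u⁻¹ * v)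

lemma phiB2_swap (u v : ℂ) : PhiB2 v u = PhiB2 u v := by
  simp only [PhiB2, mul_inv, inv_inv, Prod.mk.injEq]
  exact ⟨by ring, by ring⟩

lemma phiB2_invl (u v : ℂ) : PhiB2 u⁻¹ v = PhiB2 u v := by
  simp only [PhiB2, mul_inv, inv_inv, Prod.mk.injEq]
  exact ⟨by ring, by ring⟩

lemma phiB2_invr (u v : ℂ) : PhiB2 u v⁻¹ = PhiB2 u v := by
  simp only [PhiB2, mul_inv, inv_inv, Prod.mk.injEq]
  exact ⟨by ring, by ring⟩

lemma sum_inv_eq {x y : ℂ} (hx : x ≠ 0) (hy : y ≠ 0) (h : x + x⁻¹ = y + y⁻¹) :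
    y = x ∨ y = x⁻¹ := by
  have hx' : x * x⁻¹ = 1 := mul_inv_cancel₀ hx
  have hy' : y * y⁻¹ = 1 := mul_inv_cancel₀ hy
  have h' : (x - y) * (x * y - 1) = 0 := by
    linear_combination x * y * h - y * hx' + x * hy'
  rcases mul_eq_zero.mp h' with h1 | h2
  · exact Or.inl (sub_eq_zero.mp h1).symm
  · exact Or.inr (eq_inv_of_mul_eq_one_right (by linear_combination h2))

/-- for unimodular `u, v, ũ, ṽ`, `Φ_{B₂}(u,v) = Φ_{B₂}(ũ,ṽ)` iff `(ũ,ṽ)`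
is one of the eight pairs
`(u,v), (u,v⁻¹), (u⁻¹,v), (u⁻¹,v⁻¹), (v,u), (v⁻¹,u), (v,u⁻¹), (v⁻¹,u⁻¹)`. -/
theorem stmt_15 (u v ut vt : ℂ) (hu : ‖u‖ = 1) (hv : ‖v‖ = 1)
    (hut : ‖ut‖ = 1) (hvt : ‖vt‖ = 1) :
    PhiB2 u v = PhiB2 ut vt ↔
      (ut, vt) = (u, v) ∨ (ut, vt) = (u, v⁻¹) ∨ (ut, vt) = (u⁻¹, v) ∨ (ut, vt) = (u⁻¹, v⁻¹)
        ∨ (ut, vt) = (v, u) ∨ (ut, vt) = (v⁻¹, u) ∨ (ut, vt) = (v, u⁻¹)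
        ∨ (ut, vt) = (v⁻¹, u⁻¹) := by
  have hu0 : u ≠ 0 := by intro h; simp [h] at hu
  have hv0 : v ≠ 0 := by intro h; simp [h] at hv
  have hut0 : ut ≠ 0 := by intro h; simp [h] at hut
  have hvt0 : vt ≠ 0 := by intro h; simp [h] at hvt
  constructor
  · intro h
    rw [PhiB2, PhiB2, Prod.mk.injEq] at h
    obtain ⟨h1, h2⟩ := h
    rw [mul_inv, mul_inv] at h2
    obtain ⟨a, ha⟩ : ∃ a : ℂ, a = u + u⁻¹ := ⟨_, rfl⟩
    obtain ⟨b, hb⟩ : ∃ b : ℂ, b = v + v⁻¹ := ⟨_, rfl⟩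
    obtain ⟨c, hc⟩ : ∃ c : ℂ, c = ut + ut⁻¹ := ⟨_, rfl⟩
    obtain ⟨d, hd⟩ : ∃ d : ℂ, d = vt + vt⁻¹ := ⟨_, rfl⟩
    have h1' : a + b = c + d := by rw [ha, hb, hc, hd]; linear_combination h1
    have h2' : a * b = c * d := by rw [ha, hb, hc, hd]; linear_combination h2
    have hq : (c - a) * (c - b) = 0 := by linear_combination (-c) * h1' + h2'
    rcases mul_eq_zero.mp hq with hA | hA
    · have ha' : u + u⁻¹ = ut + ut⁻¹ := by
        rw [← ha, ← hc]; linear_combination - sub_eq_zero.mp hA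
      have hb' : v + v⁻¹ = vt + vt⁻¹ := by
        rw [← hb, ← hd]; linear_combination h1' + sub_eq_zero.mp hA
      rcases sum_inv_eq hu0 hut0 ha' with h | h <;>
        rcases sum_inv_eq hv0 hvt0 hb' with h' | h' <;>
          simp [h, h', Prod.ext_iff]
    · have ha' : v + v⁻¹ = ut + ut⁻¹ := by
        rw [← hb, ← hc]; linear_combination - sub_eq_zero.mp hA
      have hb' : u + u⁻¹ = vt + vt⁻¹ := by
        rw [← ha, ← hd]; linear_combination h1' + sub_eq_zero.mp hA
      rcases sum_inv_eq hv0 hut0 ha' with h | h <;>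
        rcases sum_inv_eq hu0 hvt0 hb' with h' | h' <;>
          simp [h, h', Prod.ext_iff]
  · intro h
    rcases h with h | h | h | h | h | h | h | h <;>
      rw [Prod.mk.injEq] at h <;> obtain ⟨rfl, rfl⟩ := h
    · rfl
    · rw [phiB2_invr]
    · rw [phiB2_invl]
    · rw [phiB2_invl, phiB2_invr]
    · rw [phiB2_swap]
    · rw [phiB2_invl, phiB2_swap]
    · rw [phiB2_invr, phiB2_swap]
    · rw [phiB2_invl, phiB2_invr, phiB2_swap]
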